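/- Let f : M₁ → M₂ be a homotopy equivalence of topological spaces. Then: (a) the projection f*LM₂ → LM₂, (x, γ) ↦ γ, is a homotopy equivalence; and (b) the map f̃ : LM₁ → f*LM₂ defined by f̃(γ) = (γ(1), f ∘ γ) is a homotopy equivalence, where 1 denotes the basepoint of S¹. In particular Lf = (projection) ∘ f̃. -/

import Mathlib

/-- A continuous map is a homotopy equivalence if it admits a continuous
homotopy inverse. -/
def IsHomotopyEquiv {X Y : Type*} [TopologicalSpace X] [TopologicalSpace Y]
    (f : C(X, Y)) : Prop :=
  ∃ g : C(Y, X),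
    (g.comp f).Homotopic (ContinuousMap.id X) ∧
    (f.comp g).Homotopic (ContinuousMap.id Y)

/-- The induced map `Lf : LM₁ → LM₂`, `γ ↦ f ∘ γ`, on free loop spaces
`LM = C(S¹, M)` (compact-open topology). -/
noncomputable def loopMap {M₁ M₂ : Type*} [TopologicalSpace M₁] [TopologicalSpace M₂]
    (f : C(M₁, M₂)) : C(C(Circle, M₁), C(Circle, M₂)) :=
  ⟨fun γ => f.comp γ, ContinuousMap.continuous_postcomp f⟩

/-- The projection `f*LM₂ → LM₂`, `(x, γ) ↦ γ`, from the pullback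
`f*LM₂ = {(x, γ) ∈ M₁ × LM₂ : f x = γ 1}` (subspace of the product). -/
def pullbackProj {M₁ M₂ : Type*} [TopologicalSpace M₁] [TopologicalSpace M₂]
    (f : C(M₁, M₂)) :
    C({q : M₁ × C(Circle, M₂) // f q.1 = q.2 1}, C(Circle, M₂)) :=
  ⟨fun q => q.val.2, (continuous_snd.comp continuous_subtype_val)⟩

/-- The map `f̃ : LM₁ → f*LM₂`, `γ ↦ (γ 1, f ∘ γ)`, where `1` is the basepoint
of the circle. -/
noncomputable def loopPullbackMap {M₁ M₂ : Type*} [TopologicalSpace M₁] [TopologicalSpace M₂]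
    (f : C(M₁, M₂)) :
    C(C(Circle, M₁), {q : M₁ × C(Circle, M₂) // f q.1 = q.2 1}) :=
  ⟨fun γ => ⟨(γ 1, f.comp γ), rfl⟩,
    Continuous.subtype_mk
      (((continuous_eval_const (1 : Circle)).prodMk
        (ContinuousMap.continuous_postcomp f))) _⟩

open Set Real unitInterval ContinuousMap

namespace LoopPf

noncomputable section

def cl (r : ℝ) : unitInterval := Set.projIcc 0 1 zero_le_one r

lemma cl_coe (t : unitInterval) : cl (t : ℝ) = t := by
  rw [cl, Set.projIcc_of_mem _ t.2]

lemma cl_of_nonpos {r : ℝ} (h : r ≤ 0) : cl r = 0 := by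
  rw [cl, Set.projIcc_of_le_left _ h]; rfl

lemma cl_of_one_le {r : ℝ} (h : 1 ≤ r) : cl r = 1 := by
  rw [cl, Set.projIcc_of_right_le _ h]; rfl

lemma cl_min_one (r : ℝ) : cl (min 1 r) = cl r := by
  rcases le_total r 1 with h | h
  · rw [min_eq_right h]
  · rw [min_eq_left h, cl_of_one_le le_rfl, cl_of_one_le h]

lemma continuous_cl : Continuous cl := continuous_projIcc (h := zero_le_one)

variable {M₁ M₂ : Type*} [TopologicalSpace M₁] [TopologicalSpace M₂]
variable (f : C(M₁, M₂)) (g : C(M₂, M₁))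

def GG (G : (g.comp f).Homotopy (ContinuousMap.id M₁)) (r : ℝ) (x : M₁) : M₁ := G (cl r, x)

def KK (K : (f.comp g).Homotopy (ContinuousMap.id M₂)) (r : ℝ) (y : M₂) : M₂ := K (cl r, y)

variable (G : (g.comp f).Homotopy (ContinuousMap.id M₁))
variable (K : (f.comp g).Homotopy (ContinuousMap.id M₂))

lemma GG_nonpos {r : ℝ} (h : r ≤ 0) (x : M₁) : GG f g G r x = g (f x) := by
  rw [GG, cl_of_nonpos h, G.apply_zero]; rfl

lemma GG_one_le {r : ℝ} (h : 1 ≤ r) (x : M₁) : GG f g G r x = x := by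
  rw [GG, cl_of_one_le h, G.apply_one]; rfl

lemma GG_coe (t : unitInterval) (x : M₁) : GG f g G (t : ℝ) x = G (t, x) := by
  rw [GG, cl_coe]

lemma GG_min_one (r : ℝ) (x : M₁) : GG f g G (min 1 r) x = GG f g G r x := by
  rw [GG, GG, cl_min_one]

lemma KK_nonpos {r : ℝ} (h : r ≤ 0) (y : M₂) : KK f g K r y = f (g y) := by
  rw [KK, cl_of_nonpos h, K.apply_zero]; rfl

lemma KK_one_le {r : ℝ} (h : 1 ≤ r) (y : M₂) : KK f g K r y = y := by
  rw [KK, cl_of_one_le h, K.apply_one]; rfl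

lemma cont_GG : Continuous fun p : ℝ × M₁ => GG f g G p.1 p.2 :=
  G.continuous.comp ((continuous_cl.comp continuous_fst).prodMk continuous_snd)

lemma cont_KK : Continuous fun p : ℝ × M₂ => KK f g K p.1 p.2 :=
  K.continuous.comp ((continuous_cl.comp continuous_fst).prodMk continuous_snd)

def MM (a b c : ℝ) (x : M₁) : M₂ := KK f g K a (f (GG f g G b (GG f g G c x)))

lemma cont_MM' {α : Type*} [TopologicalSpace α] {A B C : α → ℝ} {X : α → M₁}
    (hA : Continuous A) (hB : Continuous B) (hC : Continuous C) (hX : Continuous X) :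
    Continuous fun a => MM f g G K (A a) (B a) (C a) (X a) := by
  unfold MM
  exact (cont_KK f g K).comp (hA.prodMk (f.continuous.comp ((cont_GG f g G).comp
    (hB.prodMk ((cont_GG f g G).comp (hC.prodMk hX))))))

def al (s : ℝ) : ℝ := min (3*s) (min 1 (3-3*s))
def be (s : ℝ) : ℝ := max 0 (min 1 (3*s-1))

def S1 (t v : ℝ) (x : M₁) : M₂ :=
  MM f g G K ((1-v) + v * max (1-4*t) (2*t-1)) ((1-v)*t + v * min 1 (4*t-1)) 1 x

def S2 (t v : ℝ) (x : M₁) : M₂ :=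
  if t ≤ 1/4 then MM f g G K (1-4*t) (4*t-1) 1 x
  else if t ≤ 1/2 then MM f g G K 1 (v * al (4*t-1)) ((1-v)*(4*t-1) + v * be (4*t-1)) x
  else MM f g G K (2*t-1) 1 1 x

def S3 (t v : ℝ) (x : M₁) : M₂ :=
  if t ≤ 1/3 then S2 f g G K t 1 x
  else if t ≤ 1/2 then MM f g G K 1 ((1-v) * min (12*t-4) (6-12*t)) 1 x
  else MM f g G K (2*t-1) 1 1 x

def KR (r : ℝ) (y : M₂) : M₂ :=
  if r ≤ 1/4 then KK f g K (1-4*r) (f (g y))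
  else if r ≤ 1/2 then f (GG f g G (4*r-1) (g y))
  else KK f g K (2*r-1) y

def th (t : ℝ) : ℝ := max t (min (3*t - 1/2) (1/2))

def S4 (t v : ℝ) (x : M₁) : M₂ := KR f g G K ((1-v) * th t + v * t) (f x)

def Lam (t u : ℝ) (x : M₁) : M₂ :=
  if u ≤ 1/4 then S1 f g G K t (4*u) x
  else if u ≤ 1/2 then S2 f g G K t (4*u-1) x
  else if u ≤ 3/4 then S3 f g G K t (4*u-2) x
  else S4 f g G K t (4*u-3) x

lemma E1 (t : ℝ) (x : M₁) : S1 f g G K t 1 x = S2 f g G K t 0 x := by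
  unfold S1 S2
  split_ifs with h1 h2
  · have e1 : (1-1) + 1 * max (1-4*t) (2*t-1) = 1-4*t := by
      rw [max_eq_left (by linarith)]; ring
    have e2 : (1-1)*t + 1 * min 1 (4*t-1) = min 1 (4*t-1) := by ring
    rw [e1, e2, MM, MM, GG_min_one]
  · have e1 : (1-1) + 1 * max (1-4*t) (2*t-1) = max (1-4*t) (2*t-1) := by ring
    have e2 : (1-1)*t + 1 * min 1 (4*t-1) = min 1 (4*t-1) := by ring
    have e3 : (0:ℝ) * al (4*t-1) = 0 := by ring
    have e4 : (1-0)*(4*t-1) + 0 * be (4*t-1) = 4*t-1 := by ring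
    rw [e1, e2, e3, e4, MM, MM, GG_min_one,
      KK_nonpos f g K (by rw [max_le_iff]; constructor <;> linarith),
      KK_one_le f g K le_rfl, GG_one_le f g G le_rfl, GG_nonpos f g G le_rfl]
  · have e1 : (1-1) + 1 * max (1-4*t) (2*t-1) = 2*t-1 := by
      rw [max_eq_right (by linarith)]; ring
    have e2 : (1-1)*t + 1 * min 1 (4*t-1) = 1 := by
      rw [min_eq_left (by linarith)]; ring
    rw [e1, e2]

lemma E2 (t : ℝ) (x : M₁) : S2 f g G K t 1 x = S3 f g G K t 0 x := by
  unfold S3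
  split_ifs with h1 h2
  · rfl
  · rw [S2, if_neg (by linarith), if_pos h2]
    rcases le_total t (5/12) with h3 | h3
    · have ea : al (4*t-1) = 1 := by
        rw [al, show min 1 (3-3*(4*t-1)) = 1 from min_eq_left (by linarith)]
        exact min_eq_right (by linarith)
      have eb : be (4*t-1) = 12*t-4 := by
        rw [be, show min 1 (3*(4*t-1)-1) = 3*(4*t-1)-1 from min_eq_right (by linarith),
          max_eq_right (by linarith)]
        ring
      have ec : min (12*t-4) (6-12*t) = 12*t-4 := min_eq_left (by linarith)
      rw [ea, eb, ec]
      have e1 : (1:ℝ) * 1 = 1 := by ring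
      have e2 : (1-1)*(4*t-1) + 1 * (12*t-4) = 12*t-4 := by ring
      have e3 : (1-0) * (12*t-4) = 12*t-4 := by ring
      rw [e1, e2, e3, MM, MM, GG_one_le f g G le_rfl, GG_one_le f g G le_rfl]
    · have ea : al (4*t-1) = 6-12*t := by
        rw [al, show min 1 (3-3*(4*t-1)) = 3-3*(4*t-1) from min_eq_right (by linarith),
          min_eq_right (by linarith)]
        ring
      have eb : be (4*t-1) = 1 := by
        rw [be, show min 1 (3*(4*t-1)-1) = 1 from min_eq_left (by linarith)]
        exact max_eq_right (by linarith)
      have ec : min (12*t-4) (6-12*t) = 6-12*t := min_eq_right (by linarith)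
      rw [ea, eb, ec]
      have e1 : (1:ℝ) * (6-12*t) = 6-12*t := by ring
      have e2 : (1-1)*(4*t-1) + 1 * 1 = 1 := by ring
      have e3 : (1-0) * (6-12*t) = 6-12*t := by ring
      rw [e1, e2, e3]
  · rw [S2, if_neg (by linarith), if_neg (by linarith)]

lemma E3 (t : ℝ) (x : M₁) : S3 f g G K t 1 x = S4 f g G K t 0 x := by
  have hS4 : S4 f g G K t 0 x = KR f g G K (th t) (f x) := by
    rw [S4]; congr 1; ring
  rw [hS4]
  rcases le_or_gt t (1/4) with h1 | h1
  · have hth : th t = t := by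
      rw [th, max_eq_left (le_trans (min_le_left _ _) (by linarith))]
    rw [hth, S3, if_pos (by linarith), S2, if_pos h1, KR, if_pos h1,
      MM, GG_one_le f g G le_rfl, GG_nonpos f g G (by linarith)]
  rcases le_or_gt t (1/3) with h2 | h2
  · have hth : th t = 3*t-1/2 := by
      rw [th, min_eq_left (by linarith), max_eq_right (by linarith)]
    rw [hth, S3, if_pos h2, S2, if_neg (by linarith), if_pos (by linarith),
      KR, if_neg (by push_neg; linarith), if_pos (by linarith)]
    have ea : al (4*t-1) = 12*t-3 := by
      rw [al, show min 1 (3-3*(4*t-1)) = 1 from min_eq_left (by linarith),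
        min_eq_left (by linarith)]
      ring
    have eb : be (4*t-1) = 0 := by
      rw [be, show min 1 (3*(4*t-1)-1) = 3*(4*t-1)-1 from min_eq_right (by linarith)]
      exact max_eq_left (by linarith)
    have e1 : (1:ℝ) * (12*t-3) = 12*t-3 := by ring
    have e2 : (1-1)*(4*t-1) + 1 * 0 = 0 := by ring
    have e3 : 4*(3*t-1/2)-1 = 12*t-3 := by ring
    rw [ea, eb, e1, e2, e3, MM, KK_one_le f g K le_rfl, GG_nonpos f g G le_rfl]
  rcases le_or_gt t (1/2) with h3 | h3
  · have hth : th t = 1/2 := by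
      rw [th, min_eq_right (by linarith), max_eq_right (by linarith)]
    rw [hth, S3, if_neg (by linarith), if_pos h3,
      KR, if_neg (by norm_num), if_pos le_rfl]
    have e1 : (1-1) * min (12*t-4) (6-12*t) = 0 := by ring
    have e2 : 4*(1/2 : ℝ)-1 = 1 := by norm_num
    rw [e1, e2, MM, KK_one_le f g K le_rfl, GG_one_le f g G le_rfl,
      GG_nonpos f g G le_rfl, GG_one_le f g G le_rfl]
  · have hth : th t = t := by
      rw [th, min_eq_right (by linarith), max_eq_left (by linarith)]
    rw [hth, S3, if_neg (by linarith), if_neg (by linarith),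
      KR, if_neg (by push_neg; linarith), if_neg (by push_neg; linarith),
      MM, GG_one_le f g G le_rfl, GG_one_le f g G le_rfl]

lemma E4 (t : ℝ) (x : M₁) : Lam f g G K t 0 x = f (GG f g G t x) := by
  rw [Lam, if_pos (by norm_num), S1]
  have e1 : (1-4*0) + 4*0 * max (1-4*t) (2*t-1) = 1 := by ring
  have e2 : (1-4*0)*t + 4*0 * min 1 (4*t-1) = t := by ring
  rw [e1, e2, MM, KK_one_le f g K le_rfl, GG_one_le f g G le_rfl]

lemma E5 (t : ℝ) (x : M₁) : Lam f g G K t 1 x = KR f g G K t (f x) := by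
  rw [Lam, if_neg (by norm_num), if_neg (by norm_num), if_neg (by norm_num), S4]
  congr 1; ring

lemma S1_left (v : ℝ) (hv : 0 ≤ v) (x : M₁) : S1 f g G K 0 v x = f (g (f x)) := by
  rw [S1]
  have e1 : (1-v) + v * max (1-4*0) (2*0-1) = 1 := by
    rw [max_eq_left (by norm_num)]; ring
  have e2 : (1-v)*0 + v * min 1 (4*0-1) = -v := by
    rw [min_eq_right (by norm_num)]; ring
  rw [e1, e2, MM, KK_one_le f g K le_rfl, GG_one_le f g G le_rfl,
    GG_nonpos f g G (by linarith)]

lemma S2_left (v : ℝ) (x : M₁) : S2 f g G K 0 v x = f (g (f x)) := by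
  rw [S2, if_pos (by norm_num)]
  have e1 : 1-4*(0:ℝ) = 1 := by norm_num
  have e2 : 4*(0:ℝ)-1 = -1 := by norm_num
  rw [e1, e2, MM, KK_one_le f g K le_rfl, GG_one_le f g G le_rfl,
    GG_nonpos f g G (by norm_num)]

lemma S3_left (v : ℝ) (x : M₁) : S3 f g G K 0 v x = f (g (f x)) := by
  rw [S3, if_pos (by norm_num)]
  exact S2_left f g G K 1 x

lemma S4_left (v : ℝ) (x : M₁) : S4 f g G K 0 v x = f (g (f x)) := by
  rw [S4]
  have hth : th 0 = 0 := by
    rw [th, show min (3*(0:ℝ) - 1/2) (1/2) = 3*(0:ℝ)-1/2 from min_eq_left (by norm_num),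
      max_eq_left (by norm_num)]
  rw [hth, show (1-v) * 0 + v * 0 = (0:ℝ) from by ring, KR, if_pos (by norm_num),
    show 1-4*(0:ℝ) = 1 from by norm_num, KK_one_le f g K le_rfl]

lemma Lam_zero {u : ℝ} (hu : 0 ≤ u) (x : M₁) : Lam f g G K 0 u x = f (g (f x)) := by
  rw [Lam]
  split_ifs
  · exact S1_left f g G K _ (by linarith) x
  · exact S2_left f g G K _ x
  · exact S3_left f g G K _ x
  · exact S4_left f g G K _ x

lemma S1_right (v : ℝ) (x : M₁) : S1 f g G K 1 v x = f x := by
  rw [S1]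
  have e1 : (1-v) + v * max (1-4*1) (2*1-1) = 1 := by
    rw [max_eq_right (by norm_num)]; ring
  have e2 : (1-v)*1 + v * min 1 (4*1-1) = 1 := by
    rw [min_eq_left (by norm_num)]; ring
  rw [e1, e2, MM, KK_one_le f g K le_rfl, GG_one_le f g G le_rfl,
    GG_one_le f g G le_rfl]

lemma S2_right (v : ℝ) (x : M₁) : S2 f g G K 1 v x = f x := by
  rw [S2, if_neg (by norm_num), if_neg (by norm_num),
    show 2*(1:ℝ)-1 = 1 from by norm_num, MM, KK_one_le f g K le_rfl,
    GG_one_le f g G le_rfl, GG_one_le f g G le_rfl]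

lemma S3_right (v : ℝ) (x : M₁) : S3 f g G K 1 v x = f x := by
  rw [S3, if_neg (by norm_num), if_neg (by norm_num),
    show 2*(1:ℝ)-1 = 1 from by norm_num, MM, KK_one_le f g K le_rfl,
    GG_one_le f g G le_rfl, GG_one_le f g G le_rfl]

lemma S4_right (v : ℝ) (x : M₁) : S4 f g G K 1 v x = f x := by
  rw [S4]
  have hth : th 1 = 1 := by
    rw [th, show min (3*(1:ℝ) - 1/2) (1/2) = 1/2 from min_eq_right (by norm_num),
      max_eq_left (by norm_num)]
  rw [hth, show (1-v) * 1 + v * 1 = (1:ℝ) from by ring, KR, if_neg (by norm_num),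
    if_neg (by norm_num), show 2*(1:ℝ)-1 = 1 from by norm_num, KK_one_le f g K le_rfl]

lemma Lam_one (u : ℝ) (x : M₁) : Lam f g G K 1 u x = f x := by
  rw [Lam]
  split_ifs
  · exact S1_right f g G K _ x
  · exact S2_right f g G K _ x
  · exact S3_right f g G K _ x
  · exact S4_right f g G K _ x

lemma cont_S1 : Continuous fun p : ℝ × ℝ × M₁ => S1 f g G K p.1 p.2.1 p.2.2 := by
  unfold S1
  apply cont_MM' <;> fun_prop

lemma cont_S2 : Continuous fun p : ℝ × ℝ × M₁ => S2 f g G K p.1 p.2.1 p.2.2 := by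
  unfold S2
  apply Continuous.if_le
  · apply cont_MM' <;> fun_prop
  · apply Continuous.if_le
    · unfold al be; apply cont_MM' <;> fun_prop
    · apply cont_MM' <;> fun_prop
    · fun_prop
    · fun_prop
    · rintro ⟨t, v, x⟩ h
      dsimp only at h ⊢
      subst h
      have ea : al (4*(1/2 : ℝ)-1) = 0 := by
        rw [al, show (4*(1/2 : ℝ)-1) = 1 from by norm_num,
          show min 1 (3-3*(1:ℝ)) = 3-3*(1:ℝ) from min_eq_right (by norm_num)]
        norm_num
      rw [ea, show (4*(1/2 : ℝ)-1) = 1 from by norm_num,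
        show v * 0 = (0:ℝ) from by ring, show (1-v)*1 + v * be 1 = 1 from by
          rw [be, show min 1 (3*(1:ℝ)-1) = 1 from min_eq_left (by norm_num),
            max_eq_right (by norm_num)]; ring,
        show 2*(1/2 : ℝ)-1 = 0 from by norm_num,
        MM, MM]
      simp only [KK_one_le f g K le_rfl, KK_nonpos f g K le_rfl,
        GG_one_le f g G le_rfl, GG_nonpos f g G le_rfl]
  · fun_prop
  · fun_prop
  · rintro ⟨t, v, x⟩ h
    dsimp only at h ⊢
    subst h
    rw [if_pos (by norm_num)]
    have ea : al (4*(1/4 : ℝ)-1) = 0 := by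
      rw [al, show (4*(1/4 : ℝ)-1) = 0 from by norm_num]
      norm_num
    have eb : be (4*(1/4 : ℝ)-1) = 0 := by
      rw [be, show (4*(1/4 : ℝ)-1) = 0 from by norm_num]
      norm_num
    rw [ea, eb, show (4*(1/4 : ℝ)-1) = 0 from by norm_num,
      show (1:ℝ)-4*(1/4) = 0 from by norm_num,
      show (1-v)*0 + v*0 = (0:ℝ) from by ring, show v * 0 = (0:ℝ) from by ring,
      MM, MM]
    simp only [KK_one_le f g K le_rfl, KK_nonpos f g K le_rfl,
      GG_one_le f g G le_rfl, GG_nonpos f g G le_rfl]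

lemma cont_S3 : Continuous fun p : ℝ × ℝ × M₁ => S3 f g G K p.1 p.2.1 p.2.2 := by
  unfold S3
  apply Continuous.if_le
  · exact (cont_S2 f g G K).comp (continuous_fst.prodMk
      (continuous_const.prodMk (continuous_snd.comp continuous_snd)))
  · apply Continuous.if_le
    · apply cont_MM' <;> fun_prop
    · apply cont_MM' <;> fun_prop
    · fun_prop
    · fun_prop
    · rintro ⟨t, v, x⟩ h
      dsimp only at h ⊢
      subst h
      rw [show (1-v) * min (12*(1/2 : ℝ)-4) (6-12*(1/2)) = 0 from by
          rw [show min (12*(1/2 : ℝ)-4) (6-12*(1/2)) = 0 from by norm_num]; ring,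
        show 2*(1/2 : ℝ)-1 = 0 from by norm_num,
        MM, MM]
      simp only [KK_one_le f g K le_rfl, KK_nonpos f g K le_rfl,
        GG_one_le f g G le_rfl, GG_nonpos f g G le_rfl]
  · fun_prop
  · fun_prop
  · rintro ⟨t, v, x⟩ h
    dsimp only at h ⊢
    subst h
    rw [if_pos (by norm_num), S2, if_neg (by norm_num), if_pos (by norm_num)]
    have ea : al (4*(1/3 : ℝ)-1) = 1 := by
      rw [al]
      rw [show (4*(1/3 : ℝ)-1) = 1/3 from by norm_num]
      rw [show min 1 (3-3*(1/3 : ℝ)) = 1 from min_eq_left (by norm_num)]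
      exact min_eq_right (by norm_num)
    have eb : be (4*(1/3 : ℝ)-1) = 0 := by
      rw [be, show (4*(1/3 : ℝ)-1) = 1/3 from by norm_num,
        show min 1 (3*(1/3 : ℝ)-1) = 3*(1/3 : ℝ)-1 from min_eq_right (by norm_num)]
      norm_num
    rw [ea, eb,
      show min (12*(1/3 : ℝ)-4) (6-12*(1/3)) = 0 from by norm_num,
      show (1:ℝ) * 1 = 1 from by ring,
      show (1-1)*(4*(1/3 : ℝ)-1) + 1 * 0 = 0 from by ring,
      show (1-v) * (0:ℝ) = 0 from by ring,
      MM, MM]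
    simp only [KK_one_le f g K le_rfl, KK_nonpos f g K le_rfl,
      GG_one_le f g G le_rfl, GG_nonpos f g G le_rfl]

lemma cont_KR : Continuous fun p : ℝ × M₂ => KR f g G K p.1 p.2 := by
  unfold KR
  apply Continuous.if_le
  · exact (cont_KK f g K).comp ((by fun_prop : Continuous fun p : ℝ × M₂ => 1-4*p.1).prodMk
      (f.continuous.comp (g.continuous.comp continuous_snd)))
  · apply Continuous.if_le
    · exact f.continuous.comp ((cont_GG f g G).comp
        ((by fun_prop : Continuous fun p : ℝ × M₂ => 4*p.1-1).prodMk
        (g.continuous.comp continuous_snd)))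
    · exact (cont_KK f g K).comp ((by fun_prop : Continuous fun p : ℝ × M₂ => 2*p.1-1).prodMk
        continuous_snd)
    · fun_prop
    · fun_prop
    · rintro ⟨r, y⟩ h
      dsimp only at h ⊢
      subst h
      rw [show (4*(1/2 : ℝ)-1) = 1 from by norm_num, show (2*(1/2 : ℝ)-1) = 0 from by norm_num,
        GG_one_le f g G le_rfl, KK_nonpos f g K le_rfl]
  · fun_prop
  · fun_prop
  · rintro ⟨r, y⟩ h
    dsimp only at h ⊢
    subst h
    rw [if_pos (by norm_num), show (1:ℝ)-4*(1/4) = 0 from by norm_num,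
      show (4*(1/4 : ℝ)-1) = 0 from by norm_num,
      KK_nonpos f g K le_rfl, GG_nonpos f g G le_rfl]

lemma cont_S4 : Continuous fun p : ℝ × ℝ × M₁ => S4 f g G K p.1 p.2.1 p.2.2 := by
  unfold S4 th
  exact (cont_KR f g G K).comp (((by fun_prop : Continuous fun p : ℝ × ℝ × M₁ =>
    (1-p.2.1) * (max p.1 (min (3*p.1 - 1/2) (1/2))) + p.2.1 * p.1)).prodMk
    (f.continuous.comp (continuous_snd.comp continuous_snd)))

lemma cont_Lam : Continuous fun p : ℝ × ℝ × M₁ => Lam f g G K p.1 p.2.1 p.2.2 := by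
  unfold Lam
  apply Continuous.if_le
  · exact (cont_S1 f g G K).comp (continuous_fst.prodMk
      (((continuous_fst.comp continuous_snd).const_smul (4:ℝ)).prodMk
        (continuous_snd.comp continuous_snd)))
  · apply Continuous.if_le
    · exact (cont_S2 f g G K).comp (continuous_fst.prodMk
        ((by fun_prop : Continuous fun p : ℝ × ℝ × M₁ => 4*p.2.1-1).prodMk
          (continuous_snd.comp continuous_snd)))
    · apply Continuous.if_le
      · exact (cont_S3 f g G K).comp (continuous_fst.prodMk
          ((by fun_prop : Continuous fun p : ℝ × ℝ × M₁ => 4*p.2.1-2).prodMk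
            (continuous_snd.comp continuous_snd)))
      · exact (cont_S4 f g G K).comp (continuous_fst.prodMk
          ((by fun_prop : Continuous fun p : ℝ × ℝ × M₁ => 4*p.2.1-3).prodMk
            (continuous_snd.comp continuous_snd)))
      · fun_prop
      · fun_prop
      · rintro ⟨t, u, x⟩ h
        dsimp only at h ⊢
        subst h
        rw [show (4*(3/4 : ℝ)-2) = 1 from by norm_num,
          show (4*(3/4 : ℝ)-3) = 0 from by norm_num]
        exact E3 f g G K t x
    · fun_prop
    · fun_prop
    · rintro ⟨t, u, x⟩ h
      dsimp only at h ⊢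
      subst h
      rw [if_pos (by norm_num), show (4*(1/2 : ℝ)-1) = 1 from by norm_num,
        show (4*(1/2 : ℝ)-2) = 0 from by norm_num]
      exact E2 f g G K t x
  · fun_prop
  · fun_prop
  · rintro ⟨t, u, x⟩ h
    dsimp only at h ⊢
    subst h
    rw [if_pos (by norm_num), show (4*(1/4 : ℝ)-1) = 0 from by norm_num,
      show (4*(1/4 : ℝ)) = 1 from by norm_num]
    exact E1 f g G K t x

section CircleLemmas

lemma circle_norm (z : Circle) : (z:ℂ).re^2 + (z:ℂ).im^2 = 1 := by
  have h := Circle.normSq_coe z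
  rw [Complex.normSq_apply] at h
  nlinarith [h]

lemma circle_im_mem (z : Circle) : -1 ≤ (z:ℂ).im ∧ (z:ℂ).im ≤ 1 := by
  have h := circle_norm z
  constructor <;> nlinarith [sq_nonneg ((z:ℂ).re), sq_nonneg ((z:ℂ).im + 1), sq_nonneg ((z:ℂ).im - 1)]

/-- On the closed right half circle, `Circle.exp ∘ arcsin ∘ im` is the identity. -/
lemma exp_arcsin_im (z : Circle) (h : 0 ≤ (z:ℂ).re) :
    Circle.exp (Real.arcsin ((z:ℂ).im)) = z := by
  have him := circle_im_mem z
  apply Circle.ext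
  rw [Circle.coe_exp, Complex.exp_mul_I]
  apply Complex.ext
  · have : Real.cos (Real.arcsin ((z:ℂ).im)) = (z:ℂ).re := by
      rw [Real.cos_arcsin]
      rw [show 1 - ((z:ℂ).im)^2 = ((z:ℂ).re)^2 from by nlinarith [circle_norm z]]
      exact Real.sqrt_sq h
    simp [Complex.add_re, Complex.mul_re, Complex.I_re, Complex.I_im,
      Complex.cos_ofReal_re, Complex.sin_ofReal_im, this]
  · have : Real.sin (Real.arcsin ((z:ℂ).im)) = (z:ℂ).im := Real.sin_arcsin him.1 him.2
    simp [Complex.add_im, Complex.mul_im, Complex.I_re, Complex.I_im,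
      Complex.sin_ofReal_re, Complex.cos_ofReal_im, this]

lemma circle_im_of_re_zero {z : Circle} (h : (z:ℂ).re = 0) :
    (z:ℂ).im = 1 ∨ (z:ℂ).im = -1 := by
  have h1 : ((z:ℂ).im - 1) * ((z:ℂ).im + 1) = 0 := by nlinarith [circle_norm z]
  rcases mul_eq_zero.1 h1 with h2 | h2
  · left; linarith
  · right; linarith

/-- `z ↦ -z^2` as a self-map of the circle. -/
def negSq (z : Circle) : Circle := Circle.exp π * (z * z)

lemma continuous_negSq : Continuous negSq := by
  unfold negSq
  fun_prop

lemma negSq_of_re_zero {z : Circle} (h : (z:ℂ).re = 0) : negSq z = 1 := by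
  apply Circle.ext
  have hzz : ((z:ℂ) * (z:ℂ)) = -1 := by
    have him : (z:ℂ).im ^ 2 = 1 := by nlinarith [circle_norm z]
    apply Complex.ext
    · simp [Complex.mul_re, h]; nlinarith
    · simp [Complex.mul_im, h]
  push_cast [negSq]
  rw [hzz, Complex.exp_pi_mul_I]
  norm_num

lemma re_one_circle : ((1 : Circle) : ℂ).re = 1 := by
  rw [Circle.coe_one, Complex.one_re]

lemma im_one_circle : ((1 : Circle) : ℂ).im = 0 := by
  rw [Circle.coe_one, Complex.one_im]

/-- whisker parameter. -/
def wpar (z : Circle) : ℝ := (2/π) * |Real.arcsin ((z:ℂ).im)|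

lemma continuous_arcsin_im : Continuous fun z : Circle => Real.arcsin ((z:ℂ).im) :=
  Real.continuous_arcsin.comp (Complex.continuous_im.comp continuous_subtype_val)

lemma continuous_wpar : Continuous wpar :=
  continuous_const.mul continuous_arcsin_im.abs

lemma wpar_nonneg (z : Circle) : 0 ≤ wpar z := by
  unfold wpar
  positivity

lemma wpar_one : wpar 1 = 0 := by
  unfold wpar
  rw [im_one_circle, Real.arcsin_zero, abs_zero, mul_zero]

lemma wpar_of_re_zero {z : Circle} (h : (z:ℂ).re = 0) : wpar z = 1 := by
  unfold wpar
  rcases circle_im_of_re_zero h with h1 | h1 <;> rw [h1]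
  · rw [Real.arcsin_one, abs_of_nonneg (by positivity)]
    field_simp
  · rw [Real.arcsin_neg, Real.arcsin_one, abs_neg, abs_of_nonneg (by positivity)]
    field_simp

/-- family of reparametrisations of the circle. -/
noncomputable def qmap (u : ℝ) (z : Circle) : Circle :=
  if 0 ≤ (z:ℂ).re then Circle.exp ((1-u) * Real.arcsin ((z:ℂ).im))
  else z * Circle.exp (u * Real.arcsin (-(z:ℂ).im))

lemma continuous_coe_circle : Continuous fun z : Circle => (z : ℂ) :=
  continuous_subtype_val

lemma continuous_qmap : Continuous fun p : ℝ × Circle => qmap p.1 p.2 := by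
  unfold qmap
  apply Continuous.if_le
  · exact Circle.exp.continuous.comp ((continuous_const.sub continuous_fst).mul
      (continuous_arcsin_im.comp continuous_snd))
  · apply Continuous.mul continuous_snd
    exact Circle.exp.continuous.comp (continuous_fst.mul
      ((Real.continuous_arcsin.comp (continuous_neg.comp
        (Complex.continuous_im.comp continuous_subtype_val))).comp continuous_snd))
  · fun_prop
  · fun_prop
  · rintro ⟨u, z⟩ h
    dsimp only at h ⊢
    have hre : (z:ℂ).re = 0 := h.symm
    have hz : Circle.exp (Real.arcsin ((z:ℂ).im)) = z := exp_arcsin_im z (le_of_eq h)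
    rcases circle_im_of_re_zero hre with h1 | h1 <;> rw [h1] <;> rw [h1] at hz
    · rw [Real.arcsin_one] at hz ⊢
      rw [show -(1:ℝ) = (-1 : ℝ) from rfl, Real.arcsin_neg, Real.arcsin_one, ← hz,
        ← Circle.exp_add]
      congr 1
      ring
    · rw [Real.arcsin_neg, Real.arcsin_one] at hz ⊢
      rw [neg_neg, Real.arcsin_one, ← hz, ← Circle.exp_add]
      congr 1
      ring

lemma qmap_zero (z : Circle) : qmap 0 z = z := by
  unfold qmap
  split_ifs with h
  · rw [show (1-(0:ℝ)) * Real.arcsin ((z:ℂ).im) = Real.arcsin ((z:ℂ).im) from by ring]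
    exact exp_arcsin_im z h
  · rw [show (0:ℝ) * Real.arcsin (-(z:ℂ).im) = 0 from by ring, Circle.exp_zero, mul_one]

lemma qmap_one_pos {z : Circle} (h : 0 ≤ (z:ℂ).re) : qmap 1 z = 1 := by
  unfold qmap
  rw [if_pos h, show (1-(1:ℝ)) * Real.arcsin ((z:ℂ).im) = 0 from by ring, Circle.exp_zero]

lemma qmap_one_neg {z : Circle} (h : ¬ 0 ≤ (z:ℂ).re) : qmap 1 z = negSq z := by
  unfold qmap
  rw [if_neg h]
  have hw : 0 ≤ ((Circle.exp π * z : Circle) : ℂ).re := by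
    push_cast
    rw [Complex.exp_pi_mul_I]
    simp only [neg_one_mul, Complex.neg_re]
    push_neg at h
    linarith
  have him : ((Circle.exp π * z : Circle) : ℂ).im = -(z:ℂ).im := by
    push_cast
    rw [Complex.exp_pi_mul_I]
    simp
  have := exp_arcsin_im _ hw
  rw [him] at this
  rw [one_mul, this, mul_left_comm]
  rfl

lemma qmap_basept (u : ℝ) : qmap u 1 = 1 := by
  unfold qmap
  rw [if_pos (by rw [re_one_circle]; norm_num), im_one_circle, Real.arcsin_zero, mul_zero,
    Circle.exp_zero]

end CircleLemmas

lemma KR_zero (y : M₂) : KR f g G K 0 y = f (g y) := by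
  rw [KR, if_pos (by norm_num), show (1:ℝ)-4*0 = 1 from by norm_num, KK_one_le f g K le_rfl]

lemma KR_one (y : M₂) : KR f g G K 1 y = y := by
  rw [KR, if_neg (by norm_num), if_neg (by norm_num),
    show 2*(1:ℝ)-1 = 1 from by norm_num, KK_one_le f g K le_rfl]

/-- The pullback space. -/
abbrev PB := {q : M₁ × C(Circle, M₂) // f q.1 = q.2 1}

lemma cont_xproj : Continuous fun p : PB f => p.1.1 :=
  continuous_fst.comp continuous_subtype_val

lemma cont_gproj : Continuous fun p : PB f => p.1.2 :=
  continuous_snd.comp continuous_subtype_val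

lemma re_one_pos : (0:ℝ) ≤ ((1 : Circle) : ℂ).re := by rw [re_one_circle]; norm_num

/-- `σ : LM₂ → f*LM₂`. -/
def SigMap : C(C(Circle, M₂), PB f) :=
  ⟨fun γ => ⟨(g (γ 1), (f.comp g).comp γ), rfl⟩,
    Continuous.subtype_mk ((g.continuous.comp (continuous_eval_const 1)).prodMk
      (ContinuousMap.continuous_postcomp _)) _⟩

/-- `s : f*LM₂ → LM₁`. -/
def SMap : C(PB f, C(Circle, M₁)) :=
  ⟨fun p => g.comp p.1.2, (ContinuousMap.continuous_postcomp g).comp (cont_gproj f)⟩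

/-- the loop part of the start map of the main homotopy -/
def L0 : C(PB f × Circle, M₂) :=
  ⟨fun q => if 0 ≤ ((q.2 : ℂ)).re then f (g (f q.1.1.1))
    else f (g (q.1.1.2 (negSq q.2))), by
  apply Continuous.if_le
  · exact f.continuous.comp (g.continuous.comp (f.continuous.comp
      ((cont_xproj f).comp continuous_fst)))
  · exact f.continuous.comp (g.continuous.comp (continuous_eval.comp
      (((cont_gproj f).comp continuous_fst).prodMk (continuous_negSq.comp continuous_snd))))
  · exact continuous_const
  · exact Complex.continuous_re.comp (continuous_subtype_val.comp continuous_snd)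
  · rintro ⟨p, z⟩ h
    dsimp only at h ⊢
    rw [negSq_of_re_zero h.symm, ← p.2]⟩

lemma L0_apply (q : PB f × Circle) : L0 f g q =
    if 0 ≤ ((q.2 : ℂ)).re then f (g (f q.1.1.1)) else f (g (q.1.1.2 (negSq q.2))) := rfl

/-- the loop part of the end map of the main homotopy -/
def L1 : C(PB f × Circle, M₂) :=
  ⟨fun q => if 0 ≤ ((q.2 : ℂ)).re then f q.1.1.1
    else q.1.1.2 (negSq q.2), by
  apply Continuous.if_le
  · exact f.continuous.comp ((cont_xproj f).comp continuous_fst)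
  · exact continuous_eval.comp
      (((cont_gproj f).comp continuous_fst).prodMk (continuous_negSq.comp continuous_snd))
  · exact continuous_const
  · exact Complex.continuous_re.comp (continuous_subtype_val.comp continuous_snd)
  · rintro ⟨p, z⟩ h
    dsimp only at h ⊢
    rw [negSq_of_re_zero h.symm, ← p.2]⟩

lemma L1_apply (q : PB f × Circle) : L1 f q =
    if 0 ≤ ((q.2 : ℂ)).re then f q.1.1.1 else q.1.1.2 (negSq q.2) := rfl

lemma Hm0_mem (p : PB f) : f (g (f p.1.1)) = ((L0 f g).curry p) 1 := by
  rw [ContinuousMap.curry_apply, L0_apply, if_pos re_one_pos]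

def Hm0 : C(PB f, PB f) :=
  ⟨fun p => ⟨(g (f p.1.1), (L0 f g).curry p), Hm0_mem f g p⟩,
    Continuous.subtype_mk ((g.continuous.comp (f.continuous.comp (cont_xproj f))).prodMk
      ((L0 f g).curry.continuous)) _⟩

lemma Hm1_mem (p : PB f) : f p.1.1 = ((L1 f).curry p) 1 := by
  rw [ContinuousMap.curry_apply, L1_apply, if_pos re_one_pos]

def Hm1 : C(PB f, PB f) :=
  ⟨fun p => ⟨(p.1.1, (L1 f).curry p), Hm1_mem f p⟩,
    Continuous.subtype_mk ((cont_xproj f).prodMk ((L1 f).curry.continuous)) _⟩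

/-- the big `(t, p, z) ↦ κ_t(p)(z)` map -/
def kap : C((unitInterval × PB f) × Circle, M₂) :=
  ⟨fun q => if 0 ≤ ((q.2 : ℂ)).re
    then Lam f g G K (q.1.1 : ℝ) (wpar q.2) q.1.2.1.1
    else KR f g G K (q.1.1 : ℝ) (q.1.2.1.2 (negSq q.2)), by
  apply Continuous.if_le
  · exact (cont_Lam f g G K).comp
      ((continuous_subtype_val.comp (continuous_fst.comp continuous_fst)).prodMk
        ((continuous_wpar.comp continuous_snd).prodMk
          ((cont_xproj f).comp (continuous_snd.comp continuous_fst))))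
  · exact (cont_KR f g G K).comp
      ((continuous_subtype_val.comp (continuous_fst.comp continuous_fst)).prodMk
        (continuous_eval.comp
          (((cont_gproj f).comp (continuous_snd.comp continuous_fst)).prodMk
            (continuous_negSq.comp continuous_snd))))
  · exact continuous_const
  · exact Complex.continuous_re.comp (continuous_subtype_val.comp continuous_snd)
  · rintro ⟨⟨t, p⟩, z⟩ h
    dsimp only at h ⊢
    rw [wpar_of_re_zero h.symm, negSq_of_re_zero h.symm, E5, ← p.2]⟩

lemma kap_apply (q : (unitInterval × PB f) × Circle) : kap f g G K q =
    if 0 ≤ ((q.2 : ℂ)).re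
    then Lam f g G K (q.1.1 : ℝ) (wpar q.2) q.1.2.1.1
    else KR f g G K (q.1.1 : ℝ) (q.1.2.1.2 (negSq q.2)) := rfl

/-- The main homotopy. -/
lemma Hm_mem (tp : unitInterval × PB f) :
    f (G (tp.1, tp.2.1.1)) = ((kap f g G K).curry tp) 1 := by
  symm
  rw [ContinuousMap.curry_apply, kap_apply, if_pos re_one_pos, wpar_one, E4 f g G K,
    GG_coe]

def Hm : ContinuousMap.Homotopy (Hm0 f g) (Hm1 f) where
  toFun := fun tp => ⟨(G (tp.1, tp.2.1.1), (kap f g G K).curry tp), Hm_mem f g G K tp⟩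
  continuous_toFun := by
    apply Continuous.subtype_mk
    exact (G.continuous.comp (continuous_fst.prodMk
      ((cont_xproj f).comp continuous_snd))).prodMk ((kap f g G K).curry.continuous)
  map_zero_left := by
    intro p
    apply Subtype.ext
    apply Prod.ext
    · show G (0, p.1.1) = g (f p.1.1)
      rw [G.apply_zero]; rfl
    · apply ContinuousMap.ext
      intro z
      show kap f g G K ((0, p), z) = L0 f g (p, z)
      rw [kap_apply, L0_apply]
      split_ifs with h
      · rw [Set.Icc.coe_zero, Lam_zero f g G K (wpar_nonneg z)]
      · rw [Set.Icc.coe_zero, KR_zero]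
  map_one_left := by
    intro p
    apply Subtype.ext
    apply Prod.ext
    · show G (1, p.1.1) = p.1.1
      rw [G.apply_one]; rfl
    · apply ContinuousMap.ext
      intro z
      show kap f g G K ((1, p), z) = L1 f (p, z)
      rw [kap_apply, L1_apply]
      split_ifs with h
      · rw [Set.Icc.coe_one, Lam_one]
      · rw [Set.Icc.coe_one, KR_one]

/-- homotopy from `σ ∘ proj` to `Hm0`. -/
def AF : C((unitInterval × PB f) × Circle, M₂) :=
  ⟨fun q => f (g (q.1.2.1.2 (qmap (q.1.1 : ℝ) q.2))),
    f.continuous.comp (g.continuous.comp (continuous_eval.comp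
      (((cont_gproj f).comp (continuous_snd.comp continuous_fst)).prodMk
        (continuous_qmap.comp
          ((continuous_subtype_val.comp (continuous_fst.comp continuous_fst)).prodMk
            continuous_snd)))))⟩

lemma AF_apply (q : (unitInterval × PB f) × Circle) :
    AF f g q = f (g (q.1.2.1.2 (qmap (q.1.1 : ℝ) q.2))) := rfl

lemma Am_mem (tp : unitInterval × PB f) :
    f (g (f tp.2.1.1)) = ((AF f g).curry tp) 1 := by
  symm
  rw [ContinuousMap.curry_apply, AF_apply, qmap_basept, ← tp.2.2]

def Am : ContinuousMap.Homotopy ((SigMap f g).comp (pullbackProj f)) (Hm0 f g) where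
  toFun := fun tp => ⟨(g (f tp.2.1.1), (AF f g).curry tp), Am_mem f g tp⟩
  continuous_toFun := by
    apply Continuous.subtype_mk
    exact (g.continuous.comp (f.continuous.comp
      ((cont_xproj f).comp continuous_snd))).prodMk ((AF f g).curry.continuous)
  map_zero_left := by
    intro p
    apply Subtype.ext
    apply Prod.ext
    · show g (f p.1.1) = g (p.1.2 1)
      rw [p.2]
    · apply ContinuousMap.ext
      intro z
      rw [ContinuousMap.curry_apply, AF_apply]
      show f (g (p.1.2 (qmap (((0:unitInterval)) : ℝ) z))) = ((f.comp g).comp p.1.2) z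
      rw [Set.Icc.coe_zero, qmap_zero]
      rfl
  map_one_left := by
    intro p
    apply Subtype.ext
    apply Prod.ext
    · rfl
    · apply ContinuousMap.ext
      intro z
      show AF f g ((1, p), z) = L0 f g (p, z)
      rw [AF_apply, L0_apply]
      split_ifs with h
      · rw [Set.Icc.coe_one, qmap_one_pos h, ← p.2]
      · rw [Set.Icc.coe_one, qmap_one_neg h]

/-- homotopy from `Hm1` to the identity. -/
def BF : C((unitInterval × PB f) × Circle, M₂) :=
  ⟨fun q => q.1.2.1.2 (qmap (1 - (q.1.1 : ℝ)) q.2),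
    continuous_eval.comp
      (((cont_gproj f).comp (continuous_snd.comp continuous_fst)).prodMk
        (continuous_qmap.comp
          ((continuous_const.sub
            (continuous_subtype_val.comp (continuous_fst.comp continuous_fst))).prodMk
            continuous_snd)))⟩

lemma BF_apply (q : (unitInterval × PB f) × Circle) :
    BF f q = q.1.2.1.2 (qmap (1 - (q.1.1 : ℝ)) q.2) := rfl

lemma Bm_mem (tp : unitInterval × PB f) :
    f tp.2.1.1 = ((BF f).curry tp) 1 := by
  symm
  rw [ContinuousMap.curry_apply, BF_apply, qmap_basept, ← tp.2.2]

def Bm : ContinuousMap.Homotopy (Hm1 f) (ContinuousMap.id (PB f)) where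
  toFun := fun tp => ⟨(tp.2.1.1, (BF f).curry tp), Bm_mem f tp⟩
  continuous_toFun := by
    apply Continuous.subtype_mk
    exact ((cont_xproj f).comp continuous_snd).prodMk ((BF f).curry.continuous)
  map_zero_left := by
    intro p
    apply Subtype.ext
    apply Prod.ext
    · rfl
    · apply ContinuousMap.ext
      intro z
      show BF f ((0, p), z) = L1 f (p, z)
      rw [BF_apply, L1_apply]
      rw [Set.Icc.coe_zero, sub_zero]
      split_ifs with h
      · rw [qmap_one_pos h, ← p.2]
      · rw [qmap_one_neg h]
  map_one_left := by
    intro p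
    apply Subtype.ext
    apply Prod.ext
    · rfl
    · apply ContinuousMap.ext
      intro z
      rw [ContinuousMap.curry_apply, BF_apply]
      show p.1.2 (qmap (1 - (((1:unitInterval)) : ℝ)) z) = p.1.2 z
      rw [Set.Icc.coe_one, sub_self, qmap_zero]

include G K in
lemma bigHomotopic :
    ((SigMap f g).comp (pullbackProj f)).Homotopic (ContinuousMap.id (PB f)) :=
  ⟨(Am f g).trans ((Hm f g G K).trans (Bm f))⟩

/-- post-composition with a fixed map, as a map of the loop spaces. -/
def postC {N₁ N₂ : Type*} [TopologicalSpace N₁] [TopologicalSpace N₂] (a : C(N₁, N₂)) :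
    C(C(Circle, N₁), C(Circle, N₂)) :=
  ⟨fun γ => a.comp γ, ContinuousMap.continuous_postcomp a⟩

def postHF {N₁ N₂ : Type*} [TopologicalSpace N₁] [TopologicalSpace N₂] {a b : C(N₁, N₂)}
    (H : ContinuousMap.Homotopy a b) : C((unitInterval × C(Circle, N₁)) × Circle, N₂) :=
  ⟨fun q => H (q.1.1, q.1.2 q.2),
    H.continuous.comp ((continuous_fst.comp continuous_fst).prodMk
      (continuous_eval.comp ((continuous_snd.comp continuous_fst).prodMk continuous_snd)))⟩

def postH {N₁ N₂ : Type*} [TopologicalSpace N₁] [TopologicalSpace N₂] {a b : C(N₁, N₂)}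
    (H : ContinuousMap.Homotopy a b) :
    ContinuousMap.Homotopy (postC a) (postC b) where
  toFun := fun tγ => (postHF H).curry tγ
  continuous_toFun := (postHF H).curry.continuous
  map_zero_left := by
    intro γ
    apply ContinuousMap.ext
    intro z
    show postHF H ((0, γ), z) = a.comp γ z
    rw [show postHF H ((0, γ), z) = H (0, γ z) from rfl, H.apply_zero]
    rfl
  map_one_left := by
    intro γ
    apply ContinuousMap.ext
    intro z
    show postHF H ((1, γ), z) = b.comp γ z
    rw [show postHF H ((1, γ), z) = H (1, γ z) from rfl, H.apply_one]
    rfl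

end

end LoopPf

/-- Let `f : M₁ → M₂` be a homotopy equivalence of
topological spaces.  Then (a) the projection `f*LM₂ → LM₂`, `(x,γ) ↦ γ`, is a
homotopy equivalence; and (b) the map `f̃ : LM₁ → f*LM₂`,
`f̃ γ = (γ 1, f ∘ γ)`, is a homotopy equivalence.  In particular
`Lf = (projection) ∘ f̃`. -/
theorem loop_pullback_homotopy_equivalences {M₁ M₂ : Type*}
    [TopologicalSpace M₁] [TopologicalSpace M₂] (f : C(M₁, M₂))
    (hf : IsHomotopyEquiv f) :
    IsHomotopyEquiv (pullbackProj f) ∧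
    IsHomotopyEquiv (loopPullbackMap f) ∧
    loopMap f = (pullbackProj f).comp (loopPullbackMap f) := by
  obtain ⟨g, ⟨G⟩, ⟨K⟩⟩ := hf
  refine ⟨⟨LoopPf.SigMap f g, LoopPf.bigHomotopic f g G K, ?_⟩,
          ⟨LoopPf.SMap f g, ?_, ?_⟩, ?_⟩
  · have e1 : (pullbackProj f).comp (LoopPf.SigMap f g) = LoopPf.postC (f.comp g) :=
      ContinuousMap.ext fun γ => rfl
    have e2 : LoopPf.postC (ContinuousMap.id M₂) = ContinuousMap.id C(Circle, M₂) :=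
      ContinuousMap.ext fun γ => ContinuousMap.id_comp γ
    rw [e1, ← e2]
    exact ⟨LoopPf.postH K⟩
  · have e1 : (LoopPf.SMap f g).comp (loopPullbackMap f) = LoopPf.postC (g.comp f) :=
      ContinuousMap.ext fun γ => ContinuousMap.ext fun z => rfl
    have e2 : LoopPf.postC (ContinuousMap.id M₁) = ContinuousMap.id C(Circle, M₁) :=
      ContinuousMap.ext fun γ => ContinuousMap.id_comp γ
    rw [e1, ← e2]
    exact ⟨LoopPf.postH G⟩
  · have e : (loopPullbackMap f).comp (LoopPf.SMap f g) =
        (LoopPf.SigMap f g).comp (pullbackProj f) :=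
      ContinuousMap.ext fun p => Subtype.ext (Prod.ext rfl (ContinuousMap.ext fun z => rfl))
    rw [e]
    exact LoopPf.bigHomotopic f g G K
  · rfl
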